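/- arXiv:1711.00581 — 2 statements merged into one kernel-verified Lean document; each statement's English description precedes it below -/
import Mathlib

section
/- Let f₁, ω₁, ω₂ be positive reals and f₂ a real random variable with CDF G. Define the overlap v = max(0, min(f₁+ω₁/2, f₂+ω₂/2) − max(f₁−ω₁/2, f₂−ω₂/2)). Then for 0 ≤ x < min(ω₁, ω₂), P(v ≤ x) = 1 − G(f₁ + (ω₁+ω₂)/2 − x) + G(f₁ − (ω₁+ω₂)/2 + x), provided G is continuous. -/
open MeasureTheory

/-- CDF of the frequency-overlap random variable v. -/
theorem overlap_cdf {Ω : Type*} [MeasurableSpace Ω]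
    (μ : Measure Ω) [IsProbabilityMeasure μ]
    (f₂ : Ω → ℝ) (hf : Measurable f₂)
    (f₁ ω₁ ω₂ : ℝ) (hf₁ : 0 < f₁) (hω₁ : 0 < ω₁) (hω₂ : 0 < ω₂)
    (G : ℝ → ℝ) (hG : ∀ x, G x = (μ {ω | f₂ ω ≤ x}).toReal)
    (hGcont : Continuous G)
    (v : Ω → ℝ)
    (hv : ∀ ω, v ω = max 0 (min (f₁ + ω₁ / 2) (f₂ ω + ω₂ / 2)
        - max (f₁ - ω₁ / 2) (f₂ ω - ω₂ / 2)))
    (x : ℝ) (hx0 : 0 ≤ x) (hx : x < min ω₁ ω₂) :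
    (μ {ω | v ω ≤ x}).toReal
      = 1 - G (f₁ + (ω₁ + ω₂) / 2 - x) + G (f₁ - (ω₁ + ω₂) / 2 + x) := by
  have hx1 : x < ω₁ := lt_of_lt_of_le hx (min_le_left _ _)
  have hx2 : x < ω₂ := lt_of_lt_of_le hx (min_le_right _ _)
  have hofReal : ∀ t, μ {ω | f₂ ω ≤ t} = ENNReal.ofReal (G t) := by
    intro t
    rw [hG, ENNReal.ofReal_toReal (measure_ne_top μ _)]
  -- no atoms: μ {f₂ < t} = ofReal (G t)
  have hlt : ∀ t : ℝ, μ {ω | f₂ ω < t} = ENNReal.ofReal (G t) := by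
    intro t
    have hU : {ω | f₂ ω < t} = ⋃ n : ℕ, {ω | f₂ ω ≤ t - 1/(n+1)} := by
      ext ω
      simp only [Set.mem_setOf_eq, Set.mem_iUnion]
      constructor
      · intro h
        obtain ⟨n, hn⟩ := exists_nat_one_div_lt (sub_pos.2 h)
        exact ⟨n, by push_cast at hn ⊢; linarith⟩
      · rintro ⟨n, hn⟩
        have hp : (0:ℝ) < 1/((n:ℝ)+1) := by positivity
        linarith
    have hmono : Monotone (fun n : ℕ => {ω | f₂ ω ≤ t - 1/((n:ℝ)+1)}) := by
      intro m n hmn ω h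
      simp only [Set.mem_setOf_eq] at *
      have hc : (m:ℝ) ≤ n := Nat.cast_le.2 hmn
      have : (1:ℝ)/((n:ℝ)+1) ≤ 1/((m:ℝ)+1) := by
        apply one_div_le_one_div_of_le (by positivity) (by linarith)
      linarith
    have h1 := tendsto_measure_iUnion_atTop (μ := μ) hmono
    have h2 : Filter.Tendsto (fun n : ℕ => μ {ω | f₂ ω ≤ t - 1/((n:ℝ)+1)})
        Filter.atTop (nhds (ENNReal.ofReal (G t))) := by
      have ht : Filter.Tendsto (fun n : ℕ => t - 1/((n:ℝ)+1)) Filter.atTop (nhds t) := by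
        have := tendsto_one_div_add_atTop_nhds_zero_nat (𝕜 := ℝ)
        have h' := Filter.Tendsto.const_sub t this
        simpa using h'
      have := (ENNReal.continuous_ofReal.tendsto _).comp ((hGcont.tendsto t).comp ht)
      simpa [Function.comp_def, hofReal] using this
    rw [hU]
    exact tendsto_nhds_unique h1 h2
  set A := f₁ + (ω₁ + ω₂) / 2 - x with hA
  set B := f₁ - (ω₁ + ω₂) / 2 + x with hB
  have hset : {ω | v ω ≤ x} = {ω | f₂ ω ≤ B} ∪ {ω | A ≤ f₂ ω} := by
    ext ω
    simp only [Set.mem_setOf_eq, Set.mem_union, hv, max_le_iff]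
    constructor
    · rintro ⟨-, h⟩
      by_contra hc
      push_neg at hc
      obtain ⟨h1, h2⟩ := hc
      rw [hB] at h1
      rw [hA] at h2
      have hx' : x + max (f₁ - ω₁/2) (f₂ ω - ω₂/2) < min (f₁ + ω₁/2) (f₂ ω + ω₂/2) := by
        rcases max_cases (f₁ - ω₁/2) (f₂ ω - ω₂/2) with ⟨hm, _⟩ | ⟨hm, _⟩ <;> rw [hm] <;>
          rw [lt_min_iff] <;> constructor <;> linarith
      linarith
    · rintro (h | h)
      · refine ⟨hx0, ?_⟩
        have h1 : min (f₁+ω₁/2) (f₂ ω + ω₂/2) ≤ f₂ ω + ω₂/2 := min_le_right _ _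
        have h2 : f₁ - ω₁/2 ≤ max (f₁ - ω₁/2) (f₂ ω - ω₂/2) := le_max_left _ _
        rw [hB] at h
        linarith
      · refine ⟨hx0, ?_⟩
        have h1 : min (f₁+ω₁/2) (f₂ ω + ω₂/2) ≤ f₁ + ω₁/2 := min_le_left _ _
        have h2 : f₂ ω - ω₂/2 ≤ max (f₁ - ω₁/2) (f₂ ω - ω₂/2) := le_max_right _ _
        rw [hA] at h
        linarith
  have hBA : B < A := by rw [hA, hB]; linarith
  have hdisj : Disjoint {ω | f₂ ω ≤ B} {ω | A ≤ f₂ ω} := by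
    rw [Set.disjoint_left]
    intro ω h1 h2
    simp only [Set.mem_setOf_eq] at h1 h2
    linarith
  have hmeas2 : MeasurableSet {ω | A ≤ f₂ ω} := measurableSet_le measurable_const hf
  have hS2 : μ {ω | A ≤ f₂ ω} = 1 - ENNReal.ofReal (G A) := by
    have hcomp : {ω | A ≤ f₂ ω} = {ω | f₂ ω < A}ᶜ := by
      ext ω; simp [not_lt]
    rw [hcomp, measure_compl (measurableSet_lt hf measurable_const) (measure_ne_top μ _),
      measure_univ, hlt]
  have hGA1 : ENNReal.ofReal (G A) ≤ 1 := by
    rw [← hofReal]; exact prob_le_one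
  have hGA0 : 0 ≤ G A := by rw [hG]; exact ENNReal.toReal_nonneg
  rw [hset, measure_union hdisj hmeas2, hS2,
    ENNReal.toReal_add (measure_ne_top μ _) (by simp [tsub_le_iff_right] : (1 : ENNReal) - ENNReal.ofReal (G A) ≠ ⊤),
    ENNReal.toReal_sub_of_le hGA1 (by simp), ← hG, ENNReal.toReal_ofReal hGA0]
  simp only [ENNReal.toReal_one]
  ring
end

section
/- With the setup of the overlap random variable v, if f₂ is uniformly distributed on [a, b] with a < f₁ − (ω₁+ω₂)/2 and b > f₁ + (ω₁+ω₂)/2, and ω₂ ≤ ω₁, then E[v]/ω₁ = ω₂/(b − a). -/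
open MeasureTheory

/-- Expected normalized overlap for f₂ ~ Uniform[a,b] enclosing the overlap window. -/
theorem expected_overlap_uniform
    (f₁ ω₁ ω₂ a b : ℝ) (hf₁ : 0 < f₁) (hω₁ : 0 < ω₁) (hω₂ : 0 < ω₂)
    (hω : ω₂ ≤ ω₁)
    (ha : a < f₁ - (ω₁ + ω₂) / 2) (hb : f₁ + (ω₁ + ω₂) / 2 < b)
    (v : ℝ → ℝ)
    (hv : ∀ t, v t = max 0 (min (f₁ + ω₁ / 2) (t + ω₂ / 2)
        - max (f₁ - ω₁ / 2) (t - ω₂ / 2))) :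
    ((b - a)⁻¹ * ∫ t in a..b, v t) / ω₁ = ω₂ / (b - a) := by
  have hveq : v = fun t => max 0 (min (f₁ + ω₁ / 2) (t + ω₂ / 2)
      - max (f₁ - ω₁ / 2) (t - ω₂ / 2)) := funext hv
  have hcont : Continuous v := by rw [hveq]; fun_prop
  set c1 := f₁ - (ω₁ + ω₂) / 2 with hc1
  set c2 := f₁ - (ω₁ - ω₂) / 2 with hc2
  set c3 := f₁ + (ω₁ - ω₂) / 2 with hc3
  set c4 := f₁ + (ω₁ + ω₂) / 2 with hc4
  have hac1 : a ≤ c1 := le_of_lt ha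
  have h12 : c1 ≤ c2 := by rw [hc1, hc2]; linarith
  have h23 : c2 ≤ c3 := by rw [hc2, hc3]; linarith
  have h34 : c3 ≤ c4 := by rw [hc3, hc4]; linarith
  have hc4b : c4 ≤ b := le_of_lt hb
  have hab : a < b := by linarith
  have hintid : ∀ p q : ℝ, IntervalIntegrable (fun x : ℝ => x) volume p q :=
    fun p q => continuous_id.intervalIntegrable p q
  have e1 : (∫ t in a..c1, v t) = 0 := by
    have heq : Set.EqOn v (fun _ => (0:ℝ)) (Set.uIcc a c1) := by
      intro t ht
      rw [Set.uIcc_of_le hac1] at ht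
      have h1 : min (f₁ + ω₁ / 2) (t + ω₂ / 2) ≤ t + ω₂ / 2 := min_le_right _ _
      have h2 : f₁ - ω₁ / 2 ≤ max (f₁ - ω₁ / 2) (t - ω₂ / 2) := le_max_left _ _
      have ht1 : t ≤ c1 := ht.2
      rw [hc1] at ht1
      simp only [hv t]
      exact max_eq_left (by linarith)
    rw [intervalIntegral.integral_congr heq, intervalIntegral.integral_const, smul_zero]
  have e2 : (∫ t in c1..c2, v t) = ω₂ ^ 2 / 2 := by
    have heq : Set.EqOn v (fun t => t - c1) (Set.uIcc c1 c2) := by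
      intro t ht
      rw [Set.uIcc_of_le h12] at ht
      have ht1 : c1 ≤ t := ht.1
      have ht2 : t ≤ c2 := ht.2
      rw [hc1] at ht1; rw [hc2] at ht2
      have hmin : min (f₁ + ω₁ / 2) (t + ω₂ / 2) = t + ω₂ / 2 :=
        min_eq_right (by linarith)
      have hmax : max (f₁ - ω₁ / 2) (t - ω₂ / 2) = f₁ - ω₁ / 2 :=
        max_eq_left (by linarith)
      simp only [hv t, hmin, hmax]
      rw [max_eq_right (by linarith), hc1]
      ring
    have hsub : (∫ x in c1..c2, (x - c1)) =
        (∫ x in c1..c2, x) - ∫ _ in c1..c2, c1 :=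
      intervalIntegral.integral_sub (hintid c1 c2) intervalIntegrable_const
    rw [intervalIntegral.integral_congr heq, hsub, integral_id,
      intervalIntegral.integral_const, smul_eq_mul, hc1, hc2]
    ring
  have e3 : (∫ t in c2..c3, v t) = (ω₁ - ω₂) * ω₂ := by
    have heq : Set.EqOn v (fun _ => ω₂) (Set.uIcc c2 c3) := by
      intro t ht
      rw [Set.uIcc_of_le h23] at ht
      have ht1 : c2 ≤ t := ht.1
      have ht2 : t ≤ c3 := ht.2
      rw [hc2] at ht1; rw [hc3] at ht2
      have hmin : min (f₁ + ω₁ / 2) (t + ω₂ / 2) = t + ω₂ / 2 :=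
        min_eq_right (by linarith)
      have hmax : max (f₁ - ω₁ / 2) (t - ω₂ / 2) = t - ω₂ / 2 :=
        max_eq_right (by linarith)
      simp only [hv t, hmin, hmax]
      rw [max_eq_right (by linarith)]
      ring
    rw [intervalIntegral.integral_congr heq, intervalIntegral.integral_const,
      smul_eq_mul, hc2, hc3]
    ring
  have e4 : (∫ t in c3..c4, v t) = ω₂ ^ 2 / 2 := by
    have heq : Set.EqOn v (fun t => c4 - t) (Set.uIcc c3 c4) := by
      intro t ht
      rw [Set.uIcc_of_le h34] at ht
      have ht1 : c3 ≤ t := ht.1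
      have ht2 : t ≤ c4 := ht.2
      rw [hc3] at ht1; rw [hc4] at ht2
      have hmin : min (f₁ + ω₁ / 2) (t + ω₂ / 2) = f₁ + ω₁ / 2 :=
        min_eq_left (by linarith)
      have hmax : max (f₁ - ω₁ / 2) (t - ω₂ / 2) = t - ω₂ / 2 :=
        max_eq_right (by linarith)
      simp only [hv t, hmin, hmax]
      rw [max_eq_right (by linarith), hc4]
      ring
    have hsub : (∫ x in c3..c4, (c4 - x)) =
        (∫ _ in c3..c4, c4) - ∫ x in c3..c4, x :=
      intervalIntegral.integral_sub intervalIntegrable_const (hintid c3 c4)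
    rw [intervalIntegral.integral_congr heq, hsub, integral_id,
      intervalIntegral.integral_const, smul_eq_mul, hc3, hc4]
    ring
  have e5 : (∫ t in c4..b, v t) = 0 := by
    have heq : Set.EqOn v (fun _ => (0:ℝ)) (Set.uIcc c4 b) := by
      intro t ht
      rw [Set.uIcc_of_le hc4b] at ht
      have ht1 : c4 ≤ t := ht.1
      rw [hc4] at ht1
      have h1 : min (f₁ + ω₁ / 2) (t + ω₂ / 2) ≤ f₁ + ω₁ / 2 := min_le_left _ _
      have h2 : t - ω₂ / 2 ≤ max (f₁ - ω₁ / 2) (t - ω₂ / 2) := le_max_right _ _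
      simp only [hv t]
      exact max_eq_left (by linarith)
    rw [intervalIntegral.integral_congr heq, intervalIntegral.integral_const, smul_zero]
  have key : (∫ t in a..b, v t) = ω₁ * ω₂ := by
    rw [← intervalIntegral.integral_add_adjacent_intervals
        (hcont.intervalIntegrable a c1) (hcont.intervalIntegrable c1 b),
      ← intervalIntegral.integral_add_adjacent_intervals
        (hcont.intervalIntegrable c1 c2) (hcont.intervalIntegrable c2 b),
      ← intervalIntegral.integral_add_adjacent_intervals
        (hcont.intervalIntegrable c2 c3) (hcont.intervalIntegrable c3 b),
      ← intervalIntegral.integral_add_adjacent_intervals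
        (hcont.intervalIntegrable c3 c4) (hcont.intervalIntegrable c4 b),
      e1, e2, e3, e4, e5]
    ring
  rw [key]
  have hba : b - a ≠ 0 := by linarith
  field_simp
end
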